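/- Suppose b_{ik} > 0 for all i, k, ω_k > 0 and a_k > 0 for all k, and let μ and ν both be dual-feasible, i.e. each has all entries ≥ 0, at least one entry > 0, and satisfies β_{ij}·(entry j) ≤ (entry i) for all i ≠ j. Define the dual function f(λ) = L(λ, p(λ), 0), where p_k(λ) = max(ω_k/(ln 2 · ∑_i b_{ik} λ_i) − 1/a_k, 0). Then the vector g with g_i = E_i − ∑_k b_{ik} p_k(μ) is a subgradient of f at μ: f(ν) ≥ f(μ) + ∑_i g_i (ν_i − μ_i). -/

import Mathlib

open Finset

/-- The Lagrangian of problem (P1). -/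
noncomputable def Lagrangian {N K : ℕ} (a : Fin K → ℝ) (b : Fin N → Fin K → ℝ)
    (ω : Fin K → ℝ) (E : Fin N → ℝ) (β : Fin N → Fin N → ℝ)
    (μ : Fin N → ℝ) (p : Fin K → ℝ) (e : Fin N → Fin N → ℝ) : ℝ :=
  (∑ k, (ω k * Real.logb 2 (1 + a k * p k) - (∑ i, b i k * μ i) * p k))
    + (∑ i, ∑ j, if i = j then 0 else (β i j * μ j - μ i) * e i j)
    + (∑ i, μ i * E i)

/-- The water-filling power allocation
`p_k(λ) = max (ω_k/(ln 2 · ∑_i b_{ik} λ_i) − 1/a_k) 0`. -/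
noncomputable def waterfillPower {N K : ℕ} (a : Fin K → ℝ) (b : Fin N → Fin K → ℝ)
    (ω : Fin K → ℝ) (lam : Fin N → ℝ) (k : Fin K) : ℝ :=
  max (ω k / (Real.log 2 * ∑ i, b i k * lam i) - 1 / a k) 0

/-- The dual function `f(λ) = L(λ, p(λ), 0)`. -/
noncomputable def dualFun {N K : ℕ} (a : Fin K → ℝ) (b : Fin N → Fin K → ℝ)
    (ω : Fin K → ℝ) (E : Fin N → ℝ) (β : Fin N → Fin N → ℝ)
    (lam : Fin N → ℝ) : ℝ :=
  Lagrangian a b ω E β lam (waterfillPower a b ω lam) 0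

/-- One-dimensional water-filling optimality. -/
lemma onedim (w A c q : ℝ) (hw : 0 < w) (hA : 0 < A) (hc : 0 < c) (hq : 0 ≤ q) :
    w * Real.logb 2 (1 + A * q) - c * q ≤
    w * Real.logb 2 (1 + A * max (w / (Real.log 2 * c) - 1 / A) 0)
      - c * max (w / (Real.log 2 * c) - 1 / A) 0 := by
  have hlog2 : 0 < Real.log 2 := Real.log_pos (by norm_num)
  set t := w / (Real.log 2 * c) with ht
  have htpos : 0 < t := div_pos hw (mul_pos hlog2 hc)
  have hwt : w = Real.log 2 * c * t := by
    rw [ht, mul_div_assoc', eq_div_iff (mul_pos hlog2 hc).ne', mul_comm]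
  have hX : (0:ℝ) < 1 + A * q := by positivity
  rcases le_or_gt t (1 / A) with hcase | hcase
  · have hmax : max (t - 1 / A) 0 = 0 := max_eq_right (by linarith)
    rw [hmax, mul_zero, mul_zero, add_zero, Real.logb_one, mul_zero, sub_zero]
    have h1 : Real.log (1 + A * q) ≤ A * q := by
      have := Real.log_le_sub_one_of_pos hX; linarith
    have hAc : w * A ≤ Real.log 2 * c := by
      have := (div_le_div_iff₀ (mul_pos hlog2 hc) hA).mp hcase
      linarith
    have h3 : w * Real.log (1 + A * q) ≤ Real.log 2 * (c * q) := by
      nlinarith [mul_le_mul_of_nonneg_left h1 hw.le]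
    have h4 : (w * Real.log (1 + A * q)) / Real.log 2 ≤ c * q := by
      rw [div_le_iff₀ hlog2]; nlinarith
    simp only [Real.logb]
    linarith [(mul_div_assoc w (Real.log (1 + A * q)) (Real.log 2)).symm]
  · have hmax : max (t - 1 / A) 0 = t - 1 / A := max_eq_left (by linarith)
    rw [hmax]
    have hY : 1 + A * (t - 1 / A) = A * t := by field_simp; ring
    rw [hY]
    have hYpos : 0 < A * t := mul_pos hA htpos
    have h1 : Real.log (1 + A * q) - Real.log (A * t) ≤ (1 + A * q) / (A * t) - 1 := by
      have h := Real.log_le_sub_one_of_pos (div_pos hX hYpos)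
      rwa [Real.log_div hX.ne' hYpos.ne'] at h
    have key : w * ((1 + A * q) / (A * t) - 1) = Real.log 2 * (c * q - c * (t - 1 / A)) := by
      rw [hwt]; field_simp; ring
    have h2 : w * (Real.log (1 + A * q) - Real.log (A * t)) ≤
        Real.log 2 * (c * q - c * (t - 1 / A)) := by
      calc w * (Real.log (1 + A * q) - Real.log (A * t))
          ≤ w * ((1 + A * q) / (A * t) - 1) := mul_le_mul_of_nonneg_left h1 hw.le
        _ = _ := key
    have h4 : (w * Real.log (1 + A * q) - w * Real.log (A * t)) / Real.log 2
        ≤ c * q - c * (t - 1 / A) := by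
      rw [div_le_iff₀ hlog2]; nlinarith
    simp only [Real.logb]
    rw [sub_div] at h4
    linarith [(mul_div_assoc w (Real.log (1 + A * q)) (Real.log 2)).symm,
      (mul_div_assoc w (Real.log (A * t)) (Real.log 2)).symm]

/-- `g_i = E_i − ∑_k b_{ik} p_k(μ)` is a subgradient of the dual function at any
dual-feasible `μ`, with respect to any other dual-feasible point `ν`. -/
theorem dual_subgradient {N K : ℕ}
    (a : Fin K → ℝ) (b : Fin N → Fin K → ℝ) (ω : Fin K → ℝ)
    (E : Fin N → ℝ) (β : Fin N → Fin N → ℝ)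
    (hb : ∀ i k, 0 < b i k) (hω : ∀ k, 0 < ω k) (ha : ∀ k, 0 < a k)
    (μ ν : Fin N → ℝ)
    (hμ_nonneg : ∀ i, 0 ≤ μ i) (hμ_pos : ∃ i, 0 < μ i)
    (hμ_feas : ∀ i j : Fin N, i ≠ j → β i j * μ j ≤ μ i)
    (hν_nonneg : ∀ i, 0 ≤ ν i) (hν_pos : ∃ i, 0 < ν i)
    (hν_feas : ∀ i j : Fin N, i ≠ j → β i j * ν j ≤ ν i) :
    dualFun a b ω E β ν ≥
      dualFun a b ω E β μ
        + ∑ i, (E i - ∑ k, b i k * waterfillPower a b ω μ k) * (ν i - μ i) := by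
  obtain ⟨i0, hi0⟩ := hν_pos
  have hcν : ∀ k, 0 < ∑ i, b i k * ν i := fun k =>
    Finset.sum_pos' (fun i _ => mul_nonneg (hb i k).le (hν_nonneg i))
      ⟨i0, Finset.mem_univ i0, mul_pos (hb i0 k) hi0⟩
  set p := waterfillPower a b ω μ with hp
  have hpnn : ∀ k, 0 ≤ p k := fun k => le_max_right _ _
  -- Step 2: affine identity
  have key : Lagrangian a b ω E β ν p 0 = Lagrangian a b ω E β μ p 0
      + ∑ i, (E i - ∑ k, b i k * p k) * (ν i - μ i) := by
    simp only [Lagrangian, Pi.zero_apply, mul_zero, Finset.sum_const_zero, ite_self]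
    have hswap : ∀ lam : Fin N → ℝ,
        ∑ k, (∑ i, b i k * lam i) * p k = ∑ i, lam i * ∑ k, b i k * p k := by
      intro lam
      calc ∑ k, (∑ i, b i k * lam i) * p k
          = ∑ k, ∑ i, lam i * (b i k * p k) := by
            refine Finset.sum_congr rfl fun k _ => ?_
            rw [Finset.sum_mul]
            exact Finset.sum_congr rfl fun i _ => by ring
        _ = ∑ i, ∑ k, lam i * (b i k * p k) := Finset.sum_comm
        _ = ∑ i, lam i * ∑ k, b i k * p k := by
            refine Finset.sum_congr rfl fun i _ => ?_
            rw [Finset.mul_sum]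
    rw [Finset.sum_sub_distrib, Finset.sum_sub_distrib, hswap, hswap]
    have e1 : ∑ i, (E i - ∑ k, b i k * p k) * (ν i - μ i)
        = ((∑ i, ν i * E i) - ∑ i, ν i * ∑ k, b i k * p k)
          - ((∑ i, μ i * E i) - ∑ i, μ i * ∑ k, b i k * p k) := by
      calc ∑ i, (E i - ∑ k, b i k * p k) * (ν i - μ i)
          = ∑ i, ((ν i * E i - ν i * ∑ k, b i k * p k)
              - (μ i * E i - μ i * ∑ k, b i k * p k)) :=
            Finset.sum_congr rfl fun i _ => by ring
        _ = (∑ i, (ν i * E i - ν i * ∑ k, b i k * p k))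
              - ∑ i, (μ i * E i - μ i * ∑ k, b i k * p k) := Finset.sum_sub_distrib _ _
        _ = _ := by rw [Finset.sum_sub_distrib, Finset.sum_sub_distrib]
    linarith [e1]
  -- Step 1: maximality of waterfill at ν
  have hmax : Lagrangian a b ω E β ν p 0 ≤ dualFun a b ω E β ν := by
    simp only [dualFun, Lagrangian]
    gcongr ?_ + _ + _
    apply Finset.sum_le_sum
    intro k _
    exact onedim (ω k) (a k) (∑ i, b i k * ν i) (p k) (hω k) (ha k) (hcν k) (hpnn k)
  rw [key] at hmax
  simpa [dualFun, ge_iff_le] using hmax
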